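/- Let q be a complex number with |q| < 1, and for each integer k ≥ 0 set B₃(k) = √2·sin((2k+1)·3π/8)/sin(3π/8) + √2·sin((2k+1)π/8)/sin(π/8). Then ∑_{k=0}^∞ (−1)^k B₃(k) q^{k(k+1)/2} = 2√2 · ( ∑_{j=-∞}^∞ (−1)^j q^{8j²−2j} − q · ∑_{j=-∞}^∞ (−1)^j q^{8j²−6j} ). -/

import Mathlib

/-- The coefficient `B₃(k) = √2·sin((2k+1)·3π/8)/sin(3π/8) + √2·sin((2k+1)π/8)/sin(π/8)`. -/
noncomputable def B₃ (k : ℕ) : ℝ :=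
  Real.sqrt 2 * Real.sin ((2 * k + 1) * (3 * Real.pi) / 8) / Real.sin (3 * Real.pi / 8) +
    Real.sqrt 2 * Real.sin ((2 * k + 1) * Real.pi / 8) / Real.sin (Real.pi / 8)

open Real

lemma sin38_eq : Real.sin (3 * Real.pi / 8) = Real.cos (Real.pi / 8) := by
  rw [show 3 * Real.pi / 8 = Real.pi / 2 - Real.pi / 8 by ring, Real.sin_pi_div_two_sub]

lemma sin8_pos : 0 < Real.sin (Real.pi / 8) :=
  Real.sin_pos_of_pos_of_lt_pi (by positivity) (by linarith [Real.pi_pos])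

lemma cos8_pos : 0 < Real.cos (Real.pi / 8) := by
  rw [← sin38_eq]
  exact Real.sin_pos_of_pos_of_lt_pi (by positivity) (by linarith [Real.pi_pos])

lemma key8 : Real.cos (Real.pi / 8) ^ 2 - Real.sin (Real.pi / 8) ^ 2 =
    2 * Real.sin (Real.pi / 8) * Real.cos (Real.pi / 8) := by
  have h2 : Real.cos (Real.pi / 4) = 2 * Real.cos (Real.pi / 8) ^ 2 - 1 := by
    rw [show Real.pi / 4 = 2 * (Real.pi / 8) by ring, Real.cos_two_mul]
  have h3 : Real.sin (Real.pi / 4) = 2 * Real.sin (Real.pi / 8) * Real.cos (Real.pi / 8) := by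
    rw [show Real.pi / 4 = 2 * (Real.pi / 8) by ring, Real.sin_two_mul]
  have h4 := Real.sin_sq_add_cos_sq (Real.pi / 8)
  have h5 := Real.cos_pi_div_four
  have h6 := Real.sin_pi_div_four
  linarith

lemma quot_aux (s c : ℝ) (hs : s ≠ 0) (hc : c ≠ 0) (h : c ^ 2 - s ^ 2 = 2 * s * c) :
    Real.sqrt 2 * -s / c + Real.sqrt 2 * c / s = 2 * Real.sqrt 2 := by
  field_simp
  linear_combination h

lemma quot_aux2 (s c : ℝ) (hs : s ≠ 0) (hc : c ≠ 0) :
    Real.sqrt 2 * c / c + Real.sqrt 2 * s / s = 2 * Real.sqrt 2 := by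
  rw [mul_div_assoc, mul_div_assoc, div_self hc, div_self hs]
  ring

lemma sin38_ne : Real.sin (3 * Real.pi / 8) ≠ 0 := by
  rw [sin38_eq]; exact ne_of_gt cos8_pos

lemma sin8_ne : Real.sin (Real.pi / 8) ≠ 0 := ne_of_gt sin8_pos

lemma cos8_ne : Real.cos (Real.pi / 8) ≠ 0 := ne_of_gt cos8_pos

lemma B_zero : B₃ 0 = 2 * Real.sqrt 2 := by
  simp only [B₃, Nat.cast_zero]
  rw [show (2 * (0:ℝ) + 1) * (3 * Real.pi) / 8 = 3 * Real.pi / 8 by ring,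
    show (2 * (0:ℝ) + 1) * Real.pi / 8 = Real.pi / 8 by ring]
  exact quot_aux2 _ _ sin8_ne sin38_ne

lemma B_one : B₃ 1 = 2 * Real.sqrt 2 := by
  simp only [B₃, Nat.cast_one]
  rw [show (2 * (1:ℝ) + 1) * (3 * Real.pi) / 8 = Real.pi / 8 + Real.pi by ring,
    Real.sin_add_pi,
    show (2 * (1:ℝ) + 1) * Real.pi / 8 = 3 * Real.pi / 8 by ring, sin38_eq]
  exact quot_aux _ _ sin8_ne cos8_ne key8

lemma B_two : B₃ 2 = 2 * Real.sqrt 2 := by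
  simp only [B₃, Nat.cast_ofNat]
  rw [show (2 * (2:ℝ) + 1) * (3 * Real.pi) / 8 = -(Real.pi / 8) + 2 * Real.pi by ring,
    Real.sin_add_two_pi, Real.sin_neg,
    show (2 * (2:ℝ) + 1) * Real.pi / 8 = Real.pi - 3 * Real.pi / 8 by ring,
    Real.sin_pi_sub, sin38_eq]
  exact quot_aux _ _ sin8_ne cos8_ne key8

lemma B_three : B₃ 3 = 2 * Real.sqrt 2 := by
  simp only [B₃, Nat.cast_ofNat]
  rw [show (2 * (3:ℝ) + 1) * (3 * Real.pi) / 8 = (Real.pi - 3 * Real.pi / 8) + 2 * Real.pi by ring,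
    Real.sin_add_two_pi, Real.sin_pi_sub,
    show (2 * (3:ℝ) + 1) * Real.pi / 8 = Real.pi - Real.pi / 8 by ring,
    Real.sin_pi_sub, sin38_eq]
  exact quot_aux2 _ _ sin8_ne cos8_ne

lemma B_step (k : ℕ) : B₃ (k + 4) = -(B₃ k) := by
  simp only [B₃]
  push_cast
  rw [show (2 * ((k:ℝ) + 4) + 1) * (3 * Real.pi) / 8 =
      ((2 * (k:ℝ) + 1) * (3 * Real.pi) / 8 + Real.pi) + 2 * Real.pi by ring,
    Real.sin_add_two_pi, Real.sin_add_pi,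
    show (2 * ((k:ℝ) + 4) + 1) * Real.pi / 8 = (2 * (k:ℝ) + 1) * Real.pi / 8 + Real.pi by ring,
    Real.sin_add_pi]
  ring

lemma B_val (n r : ℕ) (h : r < 4) : B₃ (4 * n + r) = (-1) ^ n * (2 * Real.sqrt 2) := by
  induction n with
  | zero =>
    norm_num
    interval_cases r <;> simp [B_zero, B_one, B_two, B_three]
  | succ n ih =>
    rw [show 4 * (n + 1) + r = (4 * n + r) + 4 by ring, B_step, ih]
    ring

lemma B_val' (k : ℕ) : B₃ k = (-1) ^ (k / 4) * (2 * Real.sqrt 2) := by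
  have h := B_val (k / 4) (k % 4) (Nat.mod_lt _ (by norm_num))
  rwa [Nat.div_add_mod] at h

noncomputable def Lq (q : ℂ) (k : ℕ) : ℂ := (-1) ^ k * (B₃ k : ℂ) * q ^ (k * (k + 1) / 2)

lemma Lq_eq (q : ℂ) (n r : ℕ) (h : r < 4) :
    Lq q (4 * n + r) = (-1) ^ (n + r) * (2 * (Real.sqrt 2 : ℂ)) *
      q ^ ((4 * n + r) * ((4 * n + r) + 1) / 2) := by
  have hpow : ((-1 : ℂ)) ^ (4 * n + r) = (-1) ^ r := by
    rw [pow_add, pow_mul]; norm_num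
  rw [Lq, B_val n r h, hpow]
  push_cast
  ring

lemma T0 (m : ℕ) : (4 * m) * ((4 * m) + 1) / 2 = 8 * m ^ 2 + 2 * m := by
  rw [show (4 * m) * ((4 * m) + 1) = 2 * (8 * m ^ 2 + 2 * m) by ring,
    Nat.mul_div_cancel_left _ (by norm_num : 0 < 2)]

lemma T1 (m : ℕ) : (4 * m + 1) * ((4 * m + 1) + 1) / 2 = 8 * m ^ 2 + 6 * m + 1 := by
  rw [show (4 * m + 1) * ((4 * m + 1) + 1) = 2 * (8 * m ^ 2 + 6 * m + 1) by ring,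
    Nat.mul_div_cancel_left _ (by norm_num : 0 < 2)]

lemma T2 (m : ℕ) : (4 * m + 2) * ((4 * m + 2) + 1) / 2 = 8 * m ^ 2 + 10 * m + 3 := by
  rw [show (4 * m + 2) * ((4 * m + 2) + 1) = 2 * (8 * m ^ 2 + 10 * m + 3) by ring,
    Nat.mul_div_cancel_left _ (by norm_num : 0 < 2)]

lemma T3 (m : ℕ) : (4 * m + 3) * ((4 * m + 3) + 1) / 2 = 8 * m ^ 2 + 14 * m + 6 := by
  rw [show (4 * m + 3) * ((4 * m + 3) + 1) = 2 * (8 * m ^ 2 + 14 * m + 6) by ring,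
    Nat.mul_div_cancel_left _ (by norm_num : 0 < 2)]

lemma neg_one_zpow_neg_natCast (m : ℕ) : (-1 : ℂ) ^ (-(m : ℤ)) = (-1) ^ m := by
  rw [zpow_neg, zpow_natCast, ← inv_pow]
  norm_num

set_option maxHeartbeats 1000000 in
theorem stmt_12 (q : ℂ) (hq : ‖q‖ < 1) :
    ∑' k : ℕ, (-1) ^ k * (B₃ k : ℂ) * q ^ (k * (k + 1) / 2) =
      2 * (Real.sqrt 2 : ℂ) *
        ((∑' j : ℤ, (-1) ^ j * q ^ (8 * j ^ 2 - 2 * j)) -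
          q * ∑' j : ℤ, (-1) ^ j * q ^ (8 * j ^ 2 - 6 * j)) := by
  have hq1 : ‖q‖ < 1 := by exact hq
  -- summability of the main series
  have hLsum : Summable (fun k => Lq q k) := by
    apply Summable.of_norm_bounded (g := fun k => (2 * Real.sqrt 2) * ‖q‖ ^ k)
      ((summable_geometric_of_lt_one (norm_nonneg q) hq1).mul_left _)
    intro k
    have hT : k ≤ k * (k + 1) / 2 := by
      rw [Nat.le_div_iff_mul_le (by norm_num : 0 < 2)]
      cases k with
      | zero => simp
      | succ n => exact Nat.mul_le_mul le_rfl (by omega)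
    have hnorm : ‖Lq q k‖ = (2 * Real.sqrt 2) * ‖q‖ ^ (k * (k + 1) / 2) := by
      rw [Lq, norm_mul, norm_mul, norm_pow, norm_neg, norm_one, one_pow, one_mul,
        norm_pow, Complex.norm_real, Real.norm_eq_abs, B_val' k, abs_mul, abs_pow,
        abs_neg, abs_one, one_pow, one_mul, abs_of_nonneg (by positivity)]
    rw [hnorm]
    exact mul_le_mul_of_nonneg_left
      (pow_le_pow_of_le_one (norm_nonneg q) hq1.le hT) (by positivity)
  have hinj : ∀ r : ℕ, Function.Injective (fun n : ℕ => 4 * n + r) := by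
    intro r a b hab
    simp only at hab
    omega
  have h0 : Summable (fun n : ℕ => Lq q (4 * n)) := by
    have := hLsum.comp_injective (show Function.Injective (fun n : ℕ => 4 * n) from
      fun a b hab => by simp only at hab; omega)
    exact this
  have h1 : Summable (fun n : ℕ => Lq q (4 * n + 1)) := hLsum.comp_injective (hinj 1)
  have h2 : Summable (fun n : ℕ => Lq q (4 * n + 2)) := hLsum.comp_injective (hinj 2)
  have h3 : Summable (fun n : ℕ => Lq q (4 * n + 3)) := hLsum.comp_injective (hinj 3)
  set S0 : ℂ := ∑' n : ℕ, Lq q (4 * n) with hS0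
  set S1 : ℂ := ∑' n : ℕ, Lq q (4 * n + 1) with hS1
  set S2 : ℂ := ∑' n : ℕ, Lq q (4 * n + 2) with hS2
  set S3 : ℂ := ∑' n : ℕ, Lq q (4 * n + 3) with hS3
  -- shifted sums
  have h0shift : HasSum (fun n : ℕ => Lq q (4 * (n + 1))) (S0 - Lq q 0) := by
    refine (hasSum_nat_add_iff (f := fun m => Lq q (4 * m)) 1).mpr ?_
    rw [Finset.sum_range_one]
    have : S0 - Lq q 0 + Lq q (4 * 0) = S0 := by norm_num
    rw [this]
    exact h0.hasSum
  have h1shift : HasSum (fun n : ℕ => Lq q (4 * (n + 1) + 1)) (S1 - Lq q 1) := by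
    refine (hasSum_nat_add_iff (f := fun m => Lq q (4 * m + 1)) 1).mpr ?_
    rw [Finset.sum_range_one]
    have : S1 - Lq q 1 + Lq q (4 * 0 + 1) = S1 := by norm_num
    rw [this]
    exact h1.hasSum
  -- identify the pieces with the bilateral series terms
  have e1 : (fun n : ℕ => 2 * (Real.sqrt 2 : ℂ) *
      ((-1) ^ ((n : ℤ) + 1) * q ^ (8 * ((n : ℤ) + 1) ^ 2 - 2 * ((n : ℤ) + 1)))) =
      fun n : ℕ => Lq q (4 * n + 3) := by
    funext n
    rw [show ((n : ℤ) + 1) = ((n + 1 : ℕ) : ℤ) by push_cast; ring]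
    rw [show (8 * (((n + 1 : ℕ) : ℤ)) ^ 2 - 2 * (((n + 1 : ℕ) : ℤ))) =
      ((8 * n ^ 2 + 14 * n + 6 : ℕ) : ℤ) by push_cast; ring]
    rw [zpow_natCast, zpow_natCast, Lq_eq q n 3 (by norm_num), T3]
    ring
  have e2 : (fun n : ℕ => 2 * (Real.sqrt 2 : ℂ) *
      ((-1) ^ (-((n : ℤ) + 1)) * q ^ (8 * (-((n : ℤ) + 1)) ^ 2 - 2 * (-((n : ℤ) + 1))))) =
      fun n : ℕ => Lq q (4 * (n + 1)) := by
    funext n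
    rw [show (-((n : ℤ) + 1)) = -((n + 1 : ℕ) : ℤ) by push_cast; ring]
    rw [show (8 * (-((n + 1 : ℕ) : ℤ)) ^ 2 - 2 * (-((n + 1 : ℕ) : ℤ))) =
      ((8 * (n + 1) ^ 2 + 2 * (n + 1) : ℕ) : ℤ) by push_cast; ring]
    rw [zpow_natCast, neg_one_zpow_neg_natCast]
    have h := Lq_eq q (n + 1) 0 (by norm_num)
    rw [Nat.add_zero] at h
    rw [h, T0]
    ring
  have e3 : (fun n : ℕ => (-(2 * (Real.sqrt 2 : ℂ)) * q) *
      ((-1) ^ ((n : ℤ) + 1) * q ^ (8 * ((n : ℤ) + 1) ^ 2 - 6 * ((n : ℤ) + 1)))) =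
      fun n : ℕ => Lq q (4 * n + 2) := by
    funext n
    rw [show ((n : ℤ) + 1) = ((n + 1 : ℕ) : ℤ) by push_cast; ring]
    rw [show (8 * (((n + 1 : ℕ) : ℤ)) ^ 2 - 6 * (((n + 1 : ℕ) : ℤ))) =
      ((8 * n ^ 2 + 10 * n + 2 : ℕ) : ℤ) by push_cast; ring]
    rw [zpow_natCast, zpow_natCast, Lq_eq q n 2 (by norm_num), T2]
    ring
  have e4 : (fun n : ℕ => (-(2 * (Real.sqrt 2 : ℂ)) * q) *
      ((-1) ^ (-((n : ℤ) + 1)) * q ^ (8 * (-((n : ℤ) + 1)) ^ 2 - 6 * (-((n : ℤ) + 1))))) =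
      fun n : ℕ => Lq q (4 * (n + 1) + 1) := by
    funext n
    rw [show (-((n : ℤ) + 1)) = -((n + 1 : ℕ) : ℤ) by push_cast; ring]
    rw [show (8 * (-((n + 1 : ℕ) : ℤ)) ^ 2 - 6 * (-((n + 1 : ℕ) : ℤ))) =
      ((8 * (n + 1) ^ 2 + 6 * (n + 1) : ℕ) : ℤ) by push_cast; ring]
    rw [zpow_natCast, neg_one_zpow_neg_natCast, Lq_eq q (n + 1) 1 (by norm_num), T1]
    ring
  -- the two bilateral sums
  have hA : HasSum (fun j : ℤ => 2 * (Real.sqrt 2 : ℂ) * ((-1) ^ j * q ^ (8 * j ^ 2 - 2 * j)))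
      (S3 + S0) := by
    have hpos : HasSum (fun n : ℕ =>
        (fun j : ℤ => 2 * (Real.sqrt 2 : ℂ) * ((-1) ^ j * q ^ (8 * j ^ 2 - 2 * j))) ((n : ℤ) + 1))
        S3 := by
      simp only []
      rw [e1]
      exact h3.hasSum
    have hneg : HasSum (fun n : ℕ =>
        (fun j : ℤ => 2 * (Real.sqrt 2 : ℂ) * ((-1) ^ j * q ^ (8 * j ^ 2 - 2 * j))) (-((n : ℤ) + 1)))
        (S0 - Lq q 0) := by
      simp only []
      rw [e2]
      exact h0shift
    have h := HasSum.of_add_one_of_neg_add_one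
      (f := fun j : ℤ => 2 * (Real.sqrt 2 : ℂ) * ((-1) ^ j * q ^ (8 * j ^ 2 - 2 * j))) hpos hneg
    have hf0 : (fun j : ℤ => 2 * (Real.sqrt 2 : ℂ) * ((-1) ^ j * q ^ (8 * j ^ 2 - 2 * j))) 0
        = Lq q 0 := by
      norm_num [Lq, B_zero]
    beta_reduce at hf0; rw [hf0] at h
    have : S3 + Lq q 0 + (S0 - Lq q 0) = S3 + S0 := by ring
    rwa [this] at h
  have hB : HasSum (fun j : ℤ =>
      (-(2 * (Real.sqrt 2 : ℂ)) * q) * ((-1) ^ j * q ^ (8 * j ^ 2 - 6 * j)))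
      (S2 + S1) := by
    have hpos : HasSum (fun n : ℕ =>
        (fun j : ℤ => (-(2 * (Real.sqrt 2 : ℂ)) * q) * ((-1) ^ j * q ^ (8 * j ^ 2 - 6 * j)))
          ((n : ℤ) + 1)) S2 := by
      simp only []
      rw [e3]
      exact h2.hasSum
    have hneg : HasSum (fun n : ℕ =>
        (fun j : ℤ => (-(2 * (Real.sqrt 2 : ℂ)) * q) * ((-1) ^ j * q ^ (8 * j ^ 2 - 6 * j)))
          (-((n : ℤ) + 1))) (S1 - Lq q 1) := by
      simp only []
      rw [e4]
      exact h1shift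
    have h := HasSum.of_add_one_of_neg_add_one
      (f := fun j : ℤ => (-(2 * (Real.sqrt 2 : ℂ)) * q) * ((-1) ^ j * q ^ (8 * j ^ 2 - 6 * j))) hpos hneg
    have hf0 : (fun j : ℤ => (-(2 * (Real.sqrt 2 : ℂ)) * q) * ((-1) ^ j * q ^ (8 * j ^ 2 - 6 * j))) 0
        = Lq q 1 := by
      norm_num [Lq, B_one]
    beta_reduce at hf0; rw [hf0] at h
    have : S2 + Lq q 1 + (S1 - Lq q 1) = S2 + S1 := by ring
    rwa [this] at h
  -- split the left-hand series into the four residue classes mod 4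
  have hE : HasSum (fun m : ℕ => Lq q (2 * m)) (S0 + S2) := by
    refine HasSum.even_add_odd ?_ ?_
    · have e : (fun n : ℕ => Lq q (2 * (2 * n))) = fun n => Lq q (4 * n) := by
        funext n; congr 1; ring
      rw [e]; exact h0.hasSum
    · have e : (fun n : ℕ => Lq q (2 * (2 * n + 1))) = fun n => Lq q (4 * n + 2) := by
        funext n; congr 1; ring
      rw [e]; exact h2.hasSum
  have hO : HasSum (fun m : ℕ => Lq q (2 * m + 1)) (S1 + S3) := by
    refine HasSum.even_add_odd ?_ ?_
    · have e : (fun n : ℕ => Lq q (2 * (2 * n) + 1)) = fun n => Lq q (4 * n + 1) := by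
        funext n; congr 1; ring
      rw [e]; exact h1.hasSum
    · have e : (fun n : ℕ => Lq q (2 * (2 * n + 1) + 1)) = fun n => Lq q (4 * n + 3) := by
        funext n; congr 1; ring
      rw [e]; exact h3.hasSum
  have hL : HasSum (fun k : ℕ => Lq q k) ((S0 + S2) + (S1 + S3)) := HasSum.even_add_odd hE hO
  -- put everything together
  have hAt := hA.tsum_eq
  have hBt := hB.tsum_eq
  rw [tsum_mul_left] at hAt hBt
  have hLt : ∑' k : ℕ, (-1) ^ k * (B₃ k : ℂ) * q ^ (k * (k + 1) / 2)
      = (S0 + S2) + (S1 + S3) := hL.tsum_eq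
  rw [hLt]
  linear_combination -hAt - hBt
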